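/- For any real constants α, c, k, ϑ, the function q(x,t) = α sech(αx - (α^3-3k^2α)t + c) e^{i(kx+(k^3-3α^2 k)t+ϑ)} satisfies the focusing complex mKdV equation q_t + q_{xxx} + 6|q|^2 q_x = 0. -/

import Mathlib

open Complex

lemma cmkdv_L1 (A a b p r : ℂ) (z : ℂ) (h : Complex.cosh (a*z+b) ≠ 0) :
    HasDerivAt (fun z => A * Complex.exp (I*(p*z+r)) / Complex.cosh (a*z+b))
      (A * Complex.exp (I*(p*z+r)) *
        (I*p*Complex.cosh (a*z+b) - a*Complex.sinh (a*z+b)) / Complex.cosh (a*z+b)^2) z := by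
  have hlin : HasDerivAt (fun z : ℂ => a*z+b) a z := by
    simpa using ((hasDerivAt_id z).const_mul a).add_const b
  have hexp : HasDerivAt (fun z : ℂ => Complex.exp (I*(p*z+r)))
      (Complex.exp (I*(p*z+r)) * (I*p)) z := by
    have h1 : HasDerivAt (fun z : ℂ => I*(p*z+r)) (I*p) z := by
      simpa using (((hasDerivAt_id z).const_mul p).add_const r).const_mul I
    exact h1.cexp
  have hch : HasDerivAt (fun z : ℂ => Complex.cosh (a*z+b)) (Complex.sinh (a*z+b) * a) z :=
    ((Complex.hasDerivAt_cosh (a*z+b)).comp z hlin :)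
  have := (hexp.const_mul A).div hch h
  convert this using 1
  · rfl
  · rfl
  · rfl
  field_simp

lemma cmkdv_L2 (A a b p r : ℂ) (z : ℂ) (h : Complex.cosh (a*z+b) ≠ 0) :
    HasDerivAt (fun z => A * Complex.exp (I*(p*z+r)) *
        (I*p*Complex.cosh (a*z+b) - a*Complex.sinh (a*z+b)) / Complex.cosh (a*z+b)^2)
      (A * Complex.exp (I*(p*z+r)) *
        (-(p^2+a^2)*Complex.cosh (a*z+b)^2 - 2*I*p*a*Complex.sinh (a*z+b)*Complex.cosh (a*z+b)
          + 2*a^2*Complex.sinh (a*z+b)^2) / Complex.cosh (a*z+b)^3) z := by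
  have hlin : HasDerivAt (fun z : ℂ => a*z+b) a z := by
    simpa using ((hasDerivAt_id z).const_mul a).add_const b
  have hexp : HasDerivAt (fun z : ℂ => Complex.exp (I*(p*z+r)))
      (Complex.exp (I*(p*z+r)) * (I*p)) z := by
    have h1 : HasDerivAt (fun z : ℂ => I*(p*z+r)) (I*p) z := by
      simpa using (((hasDerivAt_id z).const_mul p).add_const r).const_mul I
    exact h1.cexp
  have hch : HasDerivAt (fun z : ℂ => Complex.cosh (a*z+b)) (Complex.sinh (a*z+b) * a) z :=
    ((Complex.hasDerivAt_cosh (a*z+b)).comp z hlin :)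
  have hsh : HasDerivAt (fun z : ℂ => Complex.sinh (a*z+b)) (Complex.cosh (a*z+b) * a) z :=
    ((Complex.hasDerivAt_sinh (a*z+b)).comp z hlin :)
  have hnum : HasDerivAt (fun z : ℂ => A * Complex.exp (I*(p*z+r)) *
      (I*p*Complex.cosh (a*z+b) - a*Complex.sinh (a*z+b)))
      ((A * (Complex.exp (I*(p*z+r)) * (I*p))) *
        (I*p*Complex.cosh (a*z+b) - a*Complex.sinh (a*z+b))
        + A * Complex.exp (I*(p*z+r)) *
          (I*p*(Complex.sinh (a*z+b) * a) - a*(Complex.cosh (a*z+b) * a))) z :=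
    (hexp.const_mul A).mul ((hch.const_mul (I*p)).sub (hsh.const_mul a))
  have hden : HasDerivAt (fun z : ℂ => Complex.cosh (a*z+b)^2)
      (2 * Complex.cosh (a*z+b)^1 * (Complex.sinh (a*z+b) * a)) z := by
    simpa using hch.fun_pow 2
  have := hnum.div hden (pow_ne_zero 2 h)
  convert this using 1
  · rfl
  · rfl
  · rfl
  field_simp
  ring_nf
  simp only [Complex.I_sq]
  ring

lemma cmkdv_L3 (A a b p r : ℂ) (z : ℂ) (h : Complex.cosh (a*z+b) ≠ 0) :
    HasDerivAt (fun z => A * Complex.exp (I*(p*z+r)) *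
        (-(p^2+a^2)*Complex.cosh (a*z+b)^2 - 2*I*p*a*Complex.sinh (a*z+b)*Complex.cosh (a*z+b)
          + 2*a^2*Complex.sinh (a*z+b)^2) / Complex.cosh (a*z+b)^3)
      (A * Complex.exp (I*(p*z+r)) *
        (-(I*p*(p^2+3*a^2))*Complex.cosh (a*z+b)^3
          + (5*a^3+3*a*p^2)*Complex.sinh (a*z+b)*Complex.cosh (a*z+b)^2
          + 6*I*p*a^2*Complex.sinh (a*z+b)^2*Complex.cosh (a*z+b)
          - 6*a^3*Complex.sinh (a*z+b)^3) / Complex.cosh (a*z+b)^4) z := by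
  have hlin : HasDerivAt (fun z : ℂ => a*z+b) a z := by
    simpa using ((hasDerivAt_id z).const_mul a).add_const b
  have hexp : HasDerivAt (fun z : ℂ => Complex.exp (I*(p*z+r)))
      (Complex.exp (I*(p*z+r)) * (I*p)) z := by
    have h1 : HasDerivAt (fun z : ℂ => I*(p*z+r)) (I*p) z := by
      simpa using (((hasDerivAt_id z).const_mul p).add_const r).const_mul I
    exact h1.cexp
  have hch : HasDerivAt (fun z : ℂ => Complex.cosh (a*z+b)) (Complex.sinh (a*z+b) * a) z :=
    ((Complex.hasDerivAt_cosh (a*z+b)).comp z hlin :)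
  have hsh : HasDerivAt (fun z : ℂ => Complex.sinh (a*z+b)) (Complex.cosh (a*z+b) * a) z :=
    ((Complex.hasDerivAt_sinh (a*z+b)).comp z hlin :)
  have htri : HasDerivAt (fun z : ℂ =>
      -(p^2+a^2)*Complex.cosh (a*z+b)^2 - 2*I*p*a*Complex.sinh (a*z+b)*Complex.cosh (a*z+b)
        + 2*a^2*Complex.sinh (a*z+b)^2)
      (-(p^2+a^2)*(2*Complex.cosh (a*z+b)^1*(Complex.sinh (a*z+b)*a))
        - 2*I*p*a*((Complex.cosh (a*z+b)*a)*Complex.cosh (a*z+b)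
            + Complex.sinh (a*z+b)*(Complex.sinh (a*z+b)*a))
        + 2*a^2*(2*Complex.sinh (a*z+b)^1*(Complex.cosh (a*z+b)*a))) z := by
    have h1 := (hch.fun_pow 2).const_mul (-(p^2+a^2))
    have h2 := (hsh.fun_mul hch).const_mul (2*I*p*a)
    have h3 := (hsh.fun_pow 2).const_mul (2*a^2)
    have := (h1.fun_sub h2).fun_add h3
    convert this using 1
    · rfl
    · rfl
    funext w; ring
    norm_num
  have hnum := (hexp.const_mul A).fun_mul htri
  have hden : HasDerivAt (fun z : ℂ => Complex.cosh (a*z+b)^3)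
      (3 * Complex.cosh (a*z+b)^2 * (Complex.sinh (a*z+b) * a)) z := by
    simpa using hch.fun_pow 3
  have := hnum.div hden (pow_ne_zero 3 h)
  convert this using 1
  · rfl
  · rfl
  · rfl
  field_simp
  ring_nf
  simp only [Complex.I_sq]
  ring


/-- The solitary wave `q(x,t) = α sech(αx-(α^3-3k^2α)t+c) e^{i(kx+(k^3-3α^2k)t+ϑ)}`
satisfies the focusing complex mKdV equation `q_t + q_{xxx} + 6|q|^2 q_x = 0`. -/
theorem solitary_wave_solves_cmKdV
    (α c k ϑ : ℝ) (q : ℝ → ℝ → ℂ)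
    (hq : ∀ x t : ℝ, q x t =
      (α : ℂ) * ((1 / Real.cosh (α * x - (α ^ 3 - 3 * k ^ 2 * α) * t + c) : ℝ) : ℂ) *
        Complex.exp (Complex.I *
          ((k : ℂ) * (x : ℂ) + ((k : ℂ) ^ 3 - 3 * (α : ℂ) ^ 2 * (k : ℂ)) * (t : ℂ)
            + (ϑ : ℂ)))) :
    ∀ x t : ℝ,
      deriv (fun s => q x s) t
        + iteratedDeriv 3 (fun y => q y t) x
        + 6 * (‖q x t‖ : ℂ) ^ 2 * deriv (fun y => q y t) x = 0 := by
  intro x t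
  have hC : ∀ u : ℝ, Complex.cosh (u:ℂ) ≠ 0 := by
    intro u
    rw [← Complex.ofReal_cosh]
    exact_mod_cast (Real.cosh_pos u).ne'
  -- constants
  set bx : ℂ := -(((α:ℂ))^3 - 3*(k:ℂ)^2*(α:ℂ))*(t:ℂ) + (c:ℂ) with hbx_def
  set rx : ℂ := ((k:ℂ)^3 - 3*(α:ℂ)^2*(k:ℂ))*(t:ℂ) + (ϑ:ℂ) with hrx_def
  set bt : ℂ := (α:ℂ)*(x:ℂ) + (c:ℂ) with hbt_def
  set rt : ℂ := (k:ℂ)*(x:ℂ) + (ϑ:ℂ) with hrt_def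
  set at' : ℂ := -((α:ℂ)^3 - 3*(k:ℂ)^2*(α:ℂ)) with hat_def
  set pt : ℂ := (k:ℂ)^3 - 3*(α:ℂ)^2*(k:ℂ) with hpt_def
  have hcx : ∀ y : ℝ, Complex.cosh ((α:ℂ)*(y:ℂ)+bx) ≠ 0 := by
    intro y
    have : (α:ℂ)*(y:ℂ)+bx = ((α*y - (α^3-3*k^2*α)*t + c : ℝ) : ℂ) := by
      rw [hbx_def]; push_cast; ring
    rw [this]; exact hC _
  have hct : ∀ s : ℝ, Complex.cosh (at'*(s:ℂ)+bt) ≠ 0 := by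
    intro s
    have : at'*(s:ℂ)+bt = ((α*x - (α^3-3*k^2*α)*s + c : ℝ) : ℂ) := by
      rw [hat_def, hbt_def]; push_cast; ring
    rw [this]; exact hC _
  -- x-direction function form
  have hfx : (fun y : ℝ => q y t)
      = (fun y : ℝ => (α:ℂ) * Complex.exp (I*((k:ℂ)*(y:ℂ)+rx)) / Complex.cosh ((α:ℂ)*(y:ℂ)+bx)) := by
    funext y
    rw [hq]
    rw [hbx_def, hrx_def, hat_def]
    push_cast
    ring_nf
  have hft : (fun s : ℝ => q x s)
      = (fun s : ℝ => (α:ℂ) * Complex.exp (I*(pt*(s:ℂ)+rt)) / Complex.cosh (at'*(s:ℂ)+bt)) := by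
    funext s
    rw [hq]
    rw [hbt_def, hrt_def, hat_def, hpt_def]
    push_cast
    ring_nf
  -- derivatives in x
  have hd1 : deriv (fun y : ℝ => q y t)
      = fun y : ℝ => (α:ℂ) * Complex.exp (I*((k:ℂ)*(y:ℂ)+rx)) *
          (I*(k:ℂ)*Complex.cosh ((α:ℂ)*(y:ℂ)+bx) - (α:ℂ)*Complex.sinh ((α:ℂ)*(y:ℂ)+bx))
          / Complex.cosh ((α:ℂ)*(y:ℂ)+bx)^2 := by
    rw [hfx]
    funext y
    exact ((cmkdv_L1 (α:ℂ) (α:ℂ) bx (k:ℂ) rx (y:ℂ) (hcx y)).comp_ofReal).deriv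
  have hd2 : deriv (fun y : ℝ => (α:ℂ) * Complex.exp (I*((k:ℂ)*(y:ℂ)+rx)) *
          (I*(k:ℂ)*Complex.cosh ((α:ℂ)*(y:ℂ)+bx) - (α:ℂ)*Complex.sinh ((α:ℂ)*(y:ℂ)+bx))
          / Complex.cosh ((α:ℂ)*(y:ℂ)+bx)^2)
      = fun y : ℝ => (α:ℂ) * Complex.exp (I*((k:ℂ)*(y:ℂ)+rx)) *
          (-((k:ℂ)^2+(α:ℂ)^2)*Complex.cosh ((α:ℂ)*(y:ℂ)+bx)^2
            - 2*I*(k:ℂ)*(α:ℂ)*Complex.sinh ((α:ℂ)*(y:ℂ)+bx)*Complex.cosh ((α:ℂ)*(y:ℂ)+bx)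
            + 2*(α:ℂ)^2*Complex.sinh ((α:ℂ)*(y:ℂ)+bx)^2)
          / Complex.cosh ((α:ℂ)*(y:ℂ)+bx)^3 := by
    funext y
    exact ((cmkdv_L2 (α:ℂ) (α:ℂ) bx (k:ℂ) rx (y:ℂ) (hcx y)).comp_ofReal).deriv
  have hd3 : deriv (fun y : ℝ => (α:ℂ) * Complex.exp (I*((k:ℂ)*(y:ℂ)+rx)) *
          (-((k:ℂ)^2+(α:ℂ)^2)*Complex.cosh ((α:ℂ)*(y:ℂ)+bx)^2
            - 2*I*(k:ℂ)*(α:ℂ)*Complex.sinh ((α:ℂ)*(y:ℂ)+bx)*Complex.cosh ((α:ℂ)*(y:ℂ)+bx)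
            + 2*(α:ℂ)^2*Complex.sinh ((α:ℂ)*(y:ℂ)+bx)^2)
          / Complex.cosh ((α:ℂ)*(y:ℂ)+bx)^3)
      = fun y : ℝ => (α:ℂ) * Complex.exp (I*((k:ℂ)*(y:ℂ)+rx)) *
          (-(I*(k:ℂ)*((k:ℂ)^2+3*(α:ℂ)^2))*Complex.cosh ((α:ℂ)*(y:ℂ)+bx)^3
            + (5*(α:ℂ)^3+3*(α:ℂ)*(k:ℂ)^2)*Complex.sinh ((α:ℂ)*(y:ℂ)+bx)*Complex.cosh ((α:ℂ)*(y:ℂ)+bx)^2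
            + 6*I*(k:ℂ)*(α:ℂ)^2*Complex.sinh ((α:ℂ)*(y:ℂ)+bx)^2*Complex.cosh ((α:ℂ)*(y:ℂ)+bx)
            - 6*(α:ℂ)^3*Complex.sinh ((α:ℂ)*(y:ℂ)+bx)^3)
          / Complex.cosh ((α:ℂ)*(y:ℂ)+bx)^4 := by
    funext y
    exact ((cmkdv_L3 (α:ℂ) (α:ℂ) bx (k:ℂ) rx (y:ℂ) (hcx y)).comp_ofReal).deriv
  have hiter : iteratedDeriv 3 (fun y : ℝ => q y t) x
      = (α:ℂ) * Complex.exp (I*((k:ℂ)*(x:ℂ)+rx)) *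
          (-(I*(k:ℂ)*((k:ℂ)^2+3*(α:ℂ)^2))*Complex.cosh ((α:ℂ)*(x:ℂ)+bx)^3
            + (5*(α:ℂ)^3+3*(α:ℂ)*(k:ℂ)^2)*Complex.sinh ((α:ℂ)*(x:ℂ)+bx)*Complex.cosh ((α:ℂ)*(x:ℂ)+bx)^2
            + 6*I*(k:ℂ)*(α:ℂ)^2*Complex.sinh ((α:ℂ)*(x:ℂ)+bx)^2*Complex.cosh ((α:ℂ)*(x:ℂ)+bx)
            - 6*(α:ℂ)^3*Complex.sinh ((α:ℂ)*(x:ℂ)+bx)^3)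
          / Complex.cosh ((α:ℂ)*(x:ℂ)+bx)^4 := by
    have h3 : iteratedDeriv 3 (fun y : ℝ => q y t) = deriv (deriv (deriv (fun y : ℝ => q y t))) := by
      rw [show (3:ℕ) = 0+1+1+1 from rfl, iteratedDeriv_succ, iteratedDeriv_succ, iteratedDeriv_succ,
        iteratedDeriv_zero]
    rw [h3, hd1, hd2, hd3]
  have hdt : deriv (fun s : ℝ => q x s) t
      = (α:ℂ) * Complex.exp (I*(pt*(t:ℂ)+rt)) *
          (I*pt*Complex.cosh (at'*(t:ℂ)+bt) - at'*Complex.sinh (at'*(t:ℂ)+bt))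
          / Complex.cosh (at'*(t:ℂ)+bt)^2 := by
    rw [hft]
    exact ((cmkdv_L1 (α:ℂ) at' bt pt rt (t:ℂ) (hct t)).comp_ofReal).deriv
  -- abs squared
  have habs : ((‖q x t‖ : ℝ) : ℂ)^2
      = (α:ℂ)^2 / Complex.cosh ((α:ℂ)*(x:ℂ)+bx)^2 := by
    have harg : I * ((k:ℂ)*(x:ℂ) + pt*(t:ℂ) + (ϑ:ℂ))
        = ((k*x + (k^3-3*α^2*k)*t + ϑ : ℝ):ℂ) * I := by
      rw [hpt_def]; push_cast; ring
    have h2 : (‖q x t‖)^2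
        = α^2 / (Real.cosh (α*x - (α^3-3*k^2*α)*t + c))^2 := by
      rw [hq x t, harg, norm_mul, norm_mul, Complex.norm_real, Complex.norm_real,
        Real.norm_eq_abs, Real.norm_eq_abs, Complex.norm_exp_ofReal_mul_I, mul_one, mul_pow, _root_.sq_abs, _root_.sq_abs]
      ring
    have hu : (α:ℂ)*(x:ℂ)+bx = ((α*x - (α^3-3*k^2*α)*t + c : ℝ) : ℂ) := by
      rw [hbx_def, hat_def]; push_cast; ring
    rw [hu, ← Complex.ofReal_cosh]
    exact_mod_cast h2
  -- put everything together
  rw [hdt, hiter, hd1, habs]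
  have e1 : at'*(t:ℂ)+bt = (α:ℂ)*(x:ℂ)+bx := by rw [hat_def, hbt_def, hbx_def]; ring
  have e2 : I*(pt*(t:ℂ)+rt) = I*((k:ℂ)*(x:ℂ)+rx) := by
    rw [hpt_def, hrt_def, hrx_def]; ring
  rw [e1, e2]
  have hid := Complex.cosh_sq_sub_sinh_sq ((α:ℂ)*(x:ℂ)+bx)
  have hC0 := hcx x
  have hE0 := Complex.exp_ne_zero (I*((k:ℂ)*(x:ℂ)+rx))
  field_simp
  rw [hat_def, hpt_def]
  linear_combination (6*(α:ℂ)^3 * Complex.exp (I*((k:ℂ)*(x:ℂ)+rx))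
    * ((α:ℂ)*Complex.sinh ((α:ℂ)*(x:ℂ)+bx) - I*(k:ℂ)*Complex.cosh ((α:ℂ)*(x:ℂ)+bx))) * hid
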